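/- Let A be a symmetric nonnegative real n×n matrix, and let s, s' ∈ [1,∞] with 1/s + 1/s' = 1 and s ≥ 2. If N := ‖A²‖_{s'→s}, then ‖A‖_{s'→2} ≤ N^{1/2} and ‖A‖_{2→s} ≤ N^{1/2}; consequently, for σ and σ' defined by 1/σ = 1/2·(1/2) + 1/2·(1/s) and 1/σ' = 1/2·(1/s') + 1/2·(1/2), one has ‖A‖_{σ'→σ}² ≤ ‖A²‖_{s'→s}. -/

import Mathlib

open scoped Classical BigOperators ENNReal

/-- The ℓ^p norm of a real vector for an extended-real exponent `p ∈ [1,∞]`. -/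
noncomputable def pNormE {α : Type*} [Fintype α] (p : ℝ≥0∞) (x : α → ℝ) : ℝ :=
  if p = ⊤ then ⨆ i, |x i| else (∑ i, |x i| ^ p.toReal) ^ (1 / p.toReal)

/-- The ℓ^p → ℓ^r operator norm of a real matrix, with extended-real exponents. -/
noncomputable def opNormE {α β : Type*} [Fintype α] [Fintype β] (p r : ℝ≥0∞)
    (A : Matrix β α ℝ) : ℝ :=
  sSup {c : ℝ | ∃ x : α → ℝ, x ≠ 0 ∧ c = pNormE r (A.mulVec x) / pNormE p x}

set_option maxHeartbeats 1000000
section aux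
variable {α β : Type*} [Fintype α] [Fintype β]

lemma pNormE_nonneg (p : ℝ≥0∞) (x : α → ℝ) : 0 ≤ pNormE p x := by
  unfold pNormE
  split
  · exact Real.iSup_nonneg fun i => abs_nonneg _
  · positivity

lemma pNormE_fin (p : ℝ≥0∞) (hp : p ≠ ⊤) (x : α → ℝ) :
    pNormE p x = (∑ i, |x i| ^ p.toReal) ^ (1 / p.toReal) := by
  simp [pNormE, hp]

lemma pNormE_top (x : α → ℝ) : pNormE ⊤ x = ⨆ i, |x i| := by simp [pNormE]

lemma abs_le_pNormE_top (x : α → ℝ) (i : α) : |x i| ≤ pNormE ⊤ x := by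
  rw [pNormE_top]
  exact le_ciSup (Set.Finite.bddAbove (Set.finite_range fun j => |x j|)) i

lemma pNormE_pos (p : ℝ≥0∞) (hp : 1 ≤ p) {x : α → ℝ} (hx : x ≠ 0) :
    0 < pNormE p x := by
  obtain ⟨i, hi⟩ := Function.ne_iff.mp hx
  rcases eq_or_ne p ⊤ with h | h
  · subst h
    exact lt_of_lt_of_le (abs_pos.mpr hi) (abs_le_pNormE_top x i)
  · rw [pNormE_fin p h]
    have hpt : 0 < p.toReal := ENNReal.toReal_pos (by intro h0; subst h0; simp at hp) h
    have : (0:ℝ) < ∑ j, |x j| ^ p.toReal := by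
      refine Finset.sum_pos' (fun j _ => by positivity) ⟨i, Finset.mem_univ i, ?_⟩
      exact Real.rpow_pos_of_pos (abs_pos.mpr hi) _
    positivity

lemma abs_le_pNormE (p : ℝ≥0∞) (hp : 1 ≤ p) (x : α → ℝ) (i : α) : |x i| ≤ pNormE p x := by
  rcases eq_or_ne p ⊤ with h | h
  · subst h; exact abs_le_pNormE_top x i
  · rw [pNormE_fin p h]
    have hpt : 0 < p.toReal := ENNReal.toReal_pos (by intro h0; subst h0; simp at hp) h
    have h1 : |x i| = (|x i| ^ p.toReal) ^ (1/p.toReal) := by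
      rw [← Real.rpow_mul (abs_nonneg _), mul_one_div, div_self hpt.ne', Real.rpow_one]
    rw [h1]
    refine Real.rpow_le_rpow (by positivity) ?_ (by positivity)
    exact Finset.single_le_sum (f := fun j => |x j| ^ p.toReal) (fun j _ => by positivity) (Finset.mem_univ i)

lemma iSup_abs_le_pNormE (p : ℝ≥0∞) (hp : 1 ≤ p) (x : α → ℝ) :
    (⨆ i, |x i|) ≤ pNormE p x := by
  rcases isEmpty_or_nonempty α with h | h
  · rw [Real.iSup_of_isEmpty]
    exact pNormE_nonneg p x
  · exact ciSup_le fun i => abs_le_pNormE p hp x i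

lemma pNormE_le_card_mul_sup (p : ℝ≥0∞) (hp : 1 ≤ p) (x : α → ℝ) :
    pNormE p x ≤ (Fintype.card α) * ⨆ i, |x i| := by
  set M := ⨆ i, |x i| with hM
  have hM0 : 0 ≤ M := Real.iSup_nonneg fun i => abs_nonneg _
  have hle : ∀ i, |x i| ≤ M := fun i =>
    le_ciSup (Set.Finite.bddAbove (Set.finite_range fun j => |x j|)) i
  rcases eq_or_ne p ⊤ with h | h
  · rw [h, pNormE_top]
    rcases isEmpty_or_nonempty α with he | he
    · rw [hM, Real.iSup_of_isEmpty]; positivity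
    · have h1 : (1:ℝ) ≤ Fintype.card α := by
        exact_mod_cast Nat.one_le_iff_ne_zero.mpr (Fintype.card_ne_zero)
      calc M = 1 * M := (one_mul M).symm
        _ ≤ (Fintype.card α) * M := by apply mul_le_mul_of_nonneg_right h1 hM0
  · rw [pNormE_fin p h]
    have hpt : 0 < p.toReal := ENNReal.toReal_pos (by intro h0; subst h0; simp at hp) h
    have h2 : ∑ i, |x i| ^ p.toReal ≤ (Fintype.card α) * M ^ p.toReal := by
      calc ∑ i, |x i| ^ p.toReal ≤ ∑ _i : α, M ^ p.toReal :=
            Finset.sum_le_sum fun i _ => Real.rpow_le_rpow (abs_nonneg _) (hle i) hpt.le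
        _ = (Fintype.card α) * M ^ p.toReal := by
            rw [Finset.sum_const, nsmul_eq_mul]; simp
    calc (∑ i, |x i| ^ p.toReal) ^ (1/p.toReal)
        ≤ ((Fintype.card α) * M ^ p.toReal) ^ (1/p.toReal) :=
          Real.rpow_le_rpow (by positivity) h2 (by positivity)
      _ = (Fintype.card α : ℝ) ^ (1/p.toReal) * M := by
          rw [Real.mul_rpow (by positivity) (by positivity),
            ← Real.rpow_mul hM0, mul_one_div, div_self hpt.ne', Real.rpow_one]
      _ ≤ (Fintype.card α) * M := by
          apply mul_le_mul_of_nonneg_right _ hM0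
          rcases Nat.eq_zero_or_pos (Fintype.card α) with hc | hc
          · rw [hc]; push_cast
            rw [Real.zero_rpow (by positivity : (0:ℝ) < 1/p.toReal).ne']
          · calc ((Fintype.card α : ℝ)) ^ (1/p.toReal)
                ≤ (Fintype.card α : ℝ) ^ (1:ℝ) := by
                  apply Real.rpow_le_rpow_of_exponent_le (by exact_mod_cast hc)
                  rw [div_le_one hpt]
                  have := (ENNReal.toReal_le_toReal (by simp) h).mpr hp
                  simpa using this
              _ = _ := Real.rpow_one _

lemma pNormE_zero (p : ℝ≥0∞) (hp : 1 ≤ p) : pNormE p (0 : α → ℝ) = 0 := by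
  rcases eq_or_ne p ⊤ with h | h
  · rw [h, pNormE_top]; simp
  · rw [pNormE_fin p h]
    have hpt : 0 < p.toReal := ENNReal.toReal_pos (by intro h0; subst h0; simp at hp) h
    have h1 : ∑ i : α, |(0:α→ℝ) i| ^ p.toReal = 0 := by
      simp [Real.zero_rpow hpt.ne']
    rw [h1, Real.zero_rpow (by positivity : (0:ℝ) < 1/p.toReal).ne']

lemma mulVec_bound (M : Matrix β α ℝ) (p r : ℝ≥0∞) (hp : 1 ≤ p) (hr : 1 ≤ r)
    (x : α → ℝ) :
    pNormE r (M.mulVec x) ≤ ((Fintype.card β) * ∑ i, ∑ j, |M i j|) * pNormE p x := by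
  set S := ∑ i, ∑ j, |M i j| with hS
  have hS0 : 0 ≤ S := by positivity
  have hsup : (⨆ i, |(M.mulVec x) i|) ≤ S * ⨆ j, |x j| := by
    have hMx : ∀ i, |(M.mulVec x) i| ≤ S * ⨆ j, |x j| := by
      intro i
      have hXsup : ∀ j, |x j| ≤ ⨆ j, |x j| := fun j =>
        le_ciSup (Set.Finite.bddAbove (Set.finite_range fun j => |x j|)) j
      have hX0 : 0 ≤ ⨆ j, |x j| := Real.iSup_nonneg fun j => abs_nonneg _
      calc |(M.mulVec x) i| ≤ ∑ j, |M i j * x j| := by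
            simpa [Matrix.mulVec, dotProduct] using
              Finset.abs_sum_le_sum_abs (fun j => M i j * x j) Finset.univ
        _ ≤ ∑ j, |M i j| * ⨆ j, |x j| := by
            refine Finset.sum_le_sum fun j _ => ?_
            rw [abs_mul]
            exact mul_le_mul_of_nonneg_left (hXsup j) (abs_nonneg _)
        _ = (∑ j, |M i j|) * ⨆ j, |x j| := by rw [Finset.sum_mul]
        _ ≤ S * ⨆ j, |x j| := by
            apply mul_le_mul_of_nonneg_right _ hX0
            exact Finset.single_le_sum (f := fun i => ∑ j, |M i j|)
              (fun k _ => Finset.sum_nonneg fun j _ => abs_nonneg _) (Finset.mem_univ i)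
    rcases isEmpty_or_nonempty β with he | he
    · rw [Real.iSup_of_isEmpty]
      exact mul_nonneg hS0 (Real.iSup_nonneg fun j => abs_nonneg _)
    · exact ciSup_le hMx
  calc pNormE r (M.mulVec x) ≤ (Fintype.card β) * ⨆ i, |(M.mulVec x) i| :=
        pNormE_le_card_mul_sup r hr _
    _ ≤ (Fintype.card β) * (S * ⨆ j, |x j|) := by
        apply mul_le_mul_of_nonneg_left hsup (by positivity)
    _ = ((Fintype.card β) * S) * ⨆ j, |x j| := by ring
    _ ≤ ((Fintype.card β) * S) * pNormE p x := by
        apply mul_le_mul_of_nonneg_left (iSup_abs_le_pNormE p hp x) (by positivity)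

lemma opNormE_nonneg (p r : ℝ≥0∞) (hp : 1 ≤ p) (M : Matrix β α ℝ) : 0 ≤ opNormE p r M := by
  apply Real.sSup_nonneg
  rintro c ⟨x, hx, rfl⟩
  exact div_nonneg (pNormE_nonneg _ _) (pNormE_nonneg _ _)

lemma opNormE_le (p r : ℝ≥0∞) (hp : 1 ≤ p) (M : Matrix β α ℝ) {C : ℝ} (hC : 0 ≤ C)
    (h : ∀ x : α → ℝ, pNormE r (M.mulVec x) ≤ C * pNormE p x) : opNormE p r M ≤ C := by
  apply Real.sSup_le _ hC
  rintro c ⟨x, hx, rfl⟩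
  rw [div_le_iff₀ (pNormE_pos p hp hx)]
  exact h x

lemma le_opNormE (p r : ℝ≥0∞) (hp : 1 ≤ p) (hr : 1 ≤ r) (M : Matrix β α ℝ) (x : α → ℝ) :
    pNormE r (M.mulVec x) ≤ opNormE p r M * pNormE p x := by
  rcases eq_or_ne x 0 with rfl | hx
  · simp only [Matrix.mulVec_zero]
    rw [pNormE_zero r hr, pNormE_zero p hp, mul_zero]
  · have hmem : pNormE r (M.mulVec x) / pNormE p x ∈
        {c : ℝ | ∃ x : α → ℝ, x ≠ 0 ∧ c = pNormE r (M.mulVec x) / pNormE p x} := ⟨x, hx, rfl⟩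
    have hbdd : BddAbove {c : ℝ | ∃ x : α → ℝ, x ≠ 0 ∧
        c = pNormE r (M.mulVec x) / pNormE p x} := by
      refine ⟨(Fintype.card β) * ∑ i, ∑ j, |M i j|, ?_⟩
      rintro c ⟨y, hy, rfl⟩
      rw [div_le_iff₀ (pNormE_pos p hp hy)]
      exact mulVec_bound M p r hp hr y
    have := le_csSup hbdd hmem
    rw [div_le_iff₀ (pNormE_pos p hp hx)] at this
    exact this

lemma pNormE_one (v : α → ℝ) : pNormE 1 v = ∑ i, |v i| := by
  rw [pNormE_fin 1 (by simp)]
  simp [Real.rpow_one]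

lemma conj_cases (p q : ℝ≥0∞) (hp : 1 ≤ p) (hq : 1 ≤ q) (h : 1/p + 1/q = 1) :
    (p = ⊤ ∧ q = 1) ∨ (q = ⊤ ∧ p = 1) ∨
      (p ≠ ⊤ ∧ q ≠ ⊤ ∧ Real.HolderConjugate p.toReal q.toReal) := by
  rcases eq_or_ne p ⊤ with hpT | hpT
  · left
    refine ⟨hpT, ?_⟩
    rw [hpT] at h
    simp only [one_div, ENNReal.inv_top, zero_add] at h
    exact ENNReal.inv_eq_one.mp h
  rcases eq_or_ne q ⊤ with hqT | hqT
  · right; left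
    refine ⟨hqT, ?_⟩
    rw [hqT] at h
    simp only [one_div, ENNReal.inv_top, add_zero] at h
    exact ENNReal.inv_eq_one.mp h
  right; right
  refine ⟨hpT, hqT, ?_⟩
  have hp0 : p ≠ 0 := by intro h0; subst h0; simp at hp
  have hq0 : q ≠ 0 := by intro h0; subst h0; simp at hq
  have hpt1 : 1 ≤ p.toReal := by
    have := (ENNReal.toReal_le_toReal (by simp) hpT).mpr hp; simpa using this
  have hqt0 : 0 < q.toReal := ENNReal.toReal_pos hq0 hqT
  have hconjR : p.toReal⁻¹ + q.toReal⁻¹ = 1 := by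
    have h1 : ((1:ℝ≥0∞)/p + 1/q).toReal = (1:ℝ≥0∞).toReal := by rw [h]
    rw [ENNReal.toReal_add (by simp [hp0]) (by simp [hq0])] at h1
    simpa [one_div, ENNReal.toReal_inv] using h1
  have hpt : 1 < p.toReal := by
    rcases eq_or_lt_of_le hpt1 with heq | hlt
    · exfalso
      rw [← heq] at hconjR
      simp at hconjR
      rw [hconjR] at hqt0
      simp at hqt0
    · exact hlt
  exact Real.holderConjugate_iff.mpr ⟨hpt, hconjR⟩

lemma holder (p q : ℝ≥0∞) (hp : 1 ≤ p) (hq : 1 ≤ q) (h : 1/p + 1/q = 1)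
    (u v : α → ℝ) : ∑ i, u i * v i ≤ pNormE p u * pNormE q v := by
  have habs : ∀ (w z : α → ℝ), ∑ i, w i * z i ≤ (⨆ i, |w i|) * ∑ i, |z i| := by
    intro w z
    have hW : 0 ≤ ⨆ i, |w i| := Real.iSup_nonneg fun i => abs_nonneg _
    calc ∑ i, w i * z i ≤ ∑ i, |w i| * |z i| := by
          refine Finset.sum_le_sum fun i _ => ?_
          rw [← abs_mul]; exact le_abs_self _
      _ ≤ ∑ i, (⨆ j, |w j|) * |z i| := by
          refine Finset.sum_le_sum fun i _ => ?_
          exact mul_le_mul_of_nonneg_right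
            (le_ciSup (Set.Finite.bddAbove (Set.finite_range fun j => |w j|)) i) (abs_nonneg _)
      _ = (⨆ i, |w i|) * ∑ i, |z i| := by rw [← Finset.mul_sum]
  rcases conj_cases p q hp hq h with ⟨hpT, hq1⟩ | ⟨hqT, hp1⟩ | ⟨hpT, hqT, hconj⟩
  · subst hpT; subst hq1
    rw [pNormE_top, pNormE_one]
    exact habs u v
  · subst hqT; subst hp1
    rw [pNormE_top, pNormE_one, mul_comm]
    calc ∑ i, u i * v i = ∑ i, v i * u i := by simp [mul_comm]
      _ ≤ _ := habs v u
  · rw [pNormE_fin p hpT, pNormE_fin q hqT]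
    exact Real.inner_le_Lp_mul_Lq Finset.univ u v hconj

lemma sq_abs_rpow (y : ℝ) : |y| ^ (2:ℝ) = y ^ 2 := by
  rw [show (2:ℝ) = ((2:ℕ):ℝ) by norm_num, Real.rpow_natCast, sq_abs]

lemma pNormE_two (x : α → ℝ) : pNormE 2 x = Real.sqrt (∑ i, x i ^ 2) := by
  rw [pNormE_fin 2 (by simp)]
  have h2 : ((2:ℝ≥0∞)).toReal = 2 := by simp
  rw [h2, Real.sqrt_eq_rpow]
  congr 1
  exact Finset.sum_congr rfl fun i _ => sq_abs_rpow (x i)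

lemma mul_sign (x : ℝ) : x * Real.sign x = |x| := by
  rcases lt_trichotomy x 0 with h | h | h
  · rw [Real.sign_of_neg h, abs_of_neg h]; ring
  · simp [h]
  · rw [Real.sign_of_pos h, abs_of_pos h]; ring

lemma abs_sign_le (x : ℝ) : |Real.sign x| ≤ 1 := by
  rcases lt_trichotomy x 0 with h | h | h
  · rw [Real.sign_of_neg h]; norm_num
  · simp [h]
  · rw [Real.sign_of_pos h]; norm_num

lemma exists_dual_fin (p q : ℝ≥0∞) (hpT : p ≠ ⊤) (hqT : q ≠ ⊤)
    (hpt : 1 < p.toReal) (hconj : p.toReal⁻¹ + q.toReal⁻¹ = 1) (u : α → ℝ) :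
    ∃ v : α → ℝ, pNormE q v ≤ 1 ∧ pNormE p u ≤ ∑ i, u i * v i := by
  set pt := p.toReal with hptdef
  set qt := q.toReal with hqtdef
  have hcj : Real.HolderConjugate pt qt := Real.holderConjugate_iff.mpr ⟨hpt, hconj⟩
  have hpt0 : 0 < pt := by linarith
  have hqt1 : 1 < qt := hcj.symm.lt
  have hqt0 : 0 < qt := by linarith
  have hq1 : (1:ℝ≥0∞) ≤ q := by
    refine (ENNReal.toReal_le_toReal (by simp) hqT).mp ?_
    simpa using hqt1.le
  have hkey : (pt - 1) * qt = pt := by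
    have h1 : pt + qt = pt * qt := by
      field_simp at hconj
      linarith
    nlinarith
  set U := pNormE p u with hU
  have hU0 : 0 ≤ U := pNormE_nonneg _ _
  set S := ∑ i, |u i| ^ pt with hSdef
  have hUS : U = S ^ (1/pt) := by rw [hU, pNormE_fin p hpT]
  have hS0 : 0 ≤ S := Finset.sum_nonneg fun i _ => by positivity
  have hSU : S = U ^ pt := by
    rw [hUS, ← Real.rpow_mul hS0, one_div, inv_mul_cancel₀ hpt0.ne', Real.rpow_one]
  rcases eq_or_lt_of_le hU0 with hU0' | hUpos
  · refine ⟨0, ?_, ?_⟩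
    · rw [pNormE_zero q hq1]; norm_num
    · rw [← hU0']; simp
  · set v : α → ℝ := fun i => Real.sign (u i) * |u i| ^ (pt - 1) / U ^ (pt - 1) with hv
    have hUpow : 0 < U ^ (pt - 1) := Real.rpow_pos_of_pos hUpos _
    have f1 : ∀ i, u i * v i = |u i| ^ pt / U ^ (pt - 1) := by
      intro i
      rcases eq_or_ne (u i) 0 with h0 | h0
      · simp [hv, h0, Real.zero_rpow hpt0.ne']
      · have habs : 0 < |u i| := abs_pos.mpr h0
        rw [hv]
        simp only []
        rw [show u i * (Real.sign (u i) * |u i| ^ (pt - 1) / U ^ (pt - 1))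
            = (u i * Real.sign (u i)) * |u i| ^ (pt - 1) / U ^ (pt - 1) by ring,
          mul_sign]
        congr 1
        rw [show pt = 1 + (pt - 1) by ring, Real.rpow_add habs, Real.rpow_one]
        ring_nf
    have f2 : ∀ i, |v i| ^ qt = |u i| ^ pt / U ^ pt := by
      intro i
      rcases eq_or_ne (u i) 0 with h0 | h0
      · simp [hv, h0, Real.zero_rpow hpt0.ne', Real.zero_rpow hqt0.ne']
      · have habs : 0 < |u i| := abs_pos.mpr h0
        have hsign : |Real.sign (u i)| = 1 := by
          rcases lt_trichotomy (u i) 0 with h | h | h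
          · rw [Real.sign_of_neg h]; norm_num
          · exact absurd h h0
          · rw [Real.sign_of_pos h]; norm_num
        have : |v i| = |u i| ^ (pt - 1) / U ^ (pt - 1) := by
          rw [hv]
          simp only []
          rw [abs_div, abs_mul, hsign, one_mul,
            abs_of_nonneg (Real.rpow_nonneg (abs_nonneg _) _),
            abs_of_nonneg hUpow.le]
        rw [this, Real.div_rpow (Real.rpow_nonneg (abs_nonneg _) _) hUpow.le,
          ← Real.rpow_mul (abs_nonneg _), ← Real.rpow_mul hU0, hkey]
    have hsum : ∑ i, u i * v i = U := by
      rw [Finset.sum_congr rfl fun i _ => f1 i, ← Finset.sum_div, ← hSdef, hSU,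
        ← Real.rpow_sub hUpos]
      norm_num
    have hnorm : pNormE q v = 1 := by
      rw [pNormE_fin q hqT, ← hqtdef,
        Finset.sum_congr rfl fun i _ => f2 i, ← Finset.sum_div, ← hSdef, hSU,
        div_self (Real.rpow_pos_of_pos hUpos _).ne', Real.one_rpow]
    exact ⟨v, le_of_eq hnorm, le_of_eq hsum.symm⟩

lemma exists_dual_top (u : α → ℝ) :
    ∃ v : α → ℝ, pNormE 1 v ≤ 1 ∧ pNormE ⊤ u ≤ ∑ i, u i * v i := by
  rcases isEmpty_or_nonempty α with he | he
  · refine ⟨0, ?_, ?_⟩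
    · rw [pNormE_zero 1 le_rfl]; norm_num
    · rw [pNormE_top, Real.iSup_of_isEmpty]
      simp
  · obtain ⟨i₀, hi₀⟩ := Finite.exists_max fun i => |u i|
    refine ⟨fun i => if i = i₀ then Real.sign (u i₀) else 0, ?_, ?_⟩
    · rw [pNormE_one]
      have : ∀ i, |if i = i₀ then Real.sign (u i₀) else 0| =
          if i = i₀ then |Real.sign (u i₀)| else 0 := by
        intro i; split <;> simp
      rw [Finset.sum_congr rfl fun i _ => this i, Finset.sum_ite_eq' Finset.univ i₀]
      simpa using abs_sign_le (u i₀)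
    · rw [pNormE_top]
      have hsum : ∑ i, u i * (if i = i₀ then Real.sign (u i₀) else 0) = |u i₀| := by
        have : ∀ i, u i * (if i = i₀ then Real.sign (u i₀) else 0) =
            if i = i₀ then u i₀ * Real.sign (u i₀) else 0 := by
          intro i; split
          · subst ‹i = i₀›; ring
          · ring
        rw [Finset.sum_congr rfl fun i _ => this i, Finset.sum_ite_eq' Finset.univ i₀,
          if_pos (Finset.mem_univ i₀), mul_sign]
      rw [hsum]
      exact ciSup_le hi₀

lemma swap_sum {n : ℕ} {A : Matrix (Fin n) (Fin n) ℝ} (hsymm : A.IsSymm)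
    (x y : Fin n → ℝ) : ∑ i, (A.mulVec x) i * y i = ∑ j, x j * (A.mulVec y) j := by
  simp only [Matrix.mulVec, dotProduct, Finset.sum_mul, Finset.mul_sum]
  rw [Finset.sum_comm]
  refine Finset.sum_congr rfl fun j _ => Finset.sum_congr rfl fun i _ => ?_
  rw [hsymm.apply i j]
  ring

section main

variable {n : ℕ} {A : Matrix (Fin n) (Fin n) ℝ} {s s' : ℝ≥0∞}

lemma L1 (hsymm : A.IsSymm) (hs : 2 ≤ s) (hs' : 1 ≤ s') (hconj : 1 / s + 1 / s' = 1)
    (x : Fin n → ℝ) :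
    pNormE 2 (A.mulVec x) ≤ Real.sqrt (opNormE s' s (A ^ 2)) * pNormE s' x := by
  have hs1 : (1:ℝ≥0∞) ≤ s := le_trans (by norm_num) hs
  set N := opNormE s' s (A ^ 2) with hN
  have hN0 : 0 ≤ N := opNormE_nonneg s' s hs' _
  set P := pNormE s' x with hP
  have hP0 : 0 ≤ P := pNormE_nonneg _ _
  have key : ∑ i, (A.mulVec x) i ^ 2 = ∑ j, ((A ^ 2).mulVec x) j * x j := by
    have h1 : ∑ i, (A.mulVec x) i ^ 2 = ∑ i, (A.mulVec x) i * (A.mulVec x) i := by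
      refine Finset.sum_congr rfl fun i _ => sq (A.mulVec x i)
    rw [h1, swap_sum hsymm, pow_two, ← Matrix.mulVec_mulVec]
    refine Finset.sum_congr rfl fun j _ => mul_comm _ _
  have hle : ∑ i, (A.mulVec x) i ^ 2 ≤ N * P ^ 2 := by
    calc ∑ i, (A.mulVec x) i ^ 2 = ∑ j, ((A ^ 2).mulVec x) j * x j := key
      _ ≤ pNormE s ((A ^ 2).mulVec x) * pNormE s' x := holder s s' hs1 hs' hconj _ _
      _ ≤ (N * pNormE s' x) * pNormE s' x := by
          apply mul_le_mul_of_nonneg_right _ hP0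
          exact le_opNormE s' s hs' hs1 (A ^ 2) x
      _ = N * P ^ 2 := by rw [← hP]; ring
  calc pNormE 2 (A.mulVec x) = Real.sqrt (∑ i, (A.mulVec x) i ^ 2) := pNormE_two _
    _ ≤ Real.sqrt (N * P ^ 2) := Real.sqrt_le_sqrt hle
    _ = Real.sqrt N * P := by
        rw [Real.sqrt_mul hN0, Real.sqrt_sq hP0]

lemma L2 (hsymm : A.IsSymm) (hs : 2 ≤ s) (hs' : 1 ≤ s') (hconj : 1 / s + 1 / s' = 1)
    (x : Fin n → ℝ) :
    pNormE s (A.mulVec x) ≤ Real.sqrt (opNormE s' s (A ^ 2)) * pNormE 2 x := by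
  have hs1 : (1:ℝ≥0∞) ≤ s := le_trans (by norm_num) hs
  set N := opNormE s' s (A ^ 2) with hN
  have hsT' : s' ≠ ⊤ := by
    rintro rfl
    rcases conj_cases s ⊤ hs1 le_top hconj with ⟨_, h1⟩ | ⟨_, h1⟩ | ⟨_, hT, _⟩
    · exact absurd h1 (by simp)
    · rw [h1] at hs; exact absurd hs (by norm_num)
    · exact hT rfl
  have hdual : ∃ v : Fin n → ℝ, pNormE s' v ≤ 1 ∧
      pNormE s (A.mulVec x) ≤ ∑ i, (A.mulVec x) i * v i := by
    rcases conj_cases s s' hs1 hs' hconj with ⟨hT, h1⟩ | ⟨hT, _⟩ | ⟨hT, hT', hcj⟩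
    · subst hT; subst h1; exact exists_dual_top _
    · exact absurd hT hsT'
    · exact exists_dual_fin s s' hT hT' hcj.lt hcj.inv_add_inv_eq_one _
  obtain ⟨v, hv1, hv2⟩ := hdual
  have h22 : (1:ℝ≥0∞)/2 + 1/2 = 1 := by
    rw [ENNReal.div_add_div_same]
    have : (1:ℝ≥0∞) + 1 = 2 := one_add_one_eq_two
    rw [this, ENNReal.div_self (by norm_num) (by norm_num)]
  calc pNormE s (A.mulVec x) ≤ ∑ i, (A.mulVec x) i * v i := hv2
    _ = ∑ j, x j * (A.mulVec v) j := swap_sum hsymm x v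
    _ ≤ pNormE 2 x * pNormE 2 (A.mulVec v) := holder 2 2 one_le_two one_le_two h22 _ _
    _ ≤ pNormE 2 x * (Real.sqrt N * pNormE s' v) := by
        apply mul_le_mul_of_nonneg_left (L1 hsymm hs hs' hconj v) (pNormE_nonneg _ _)
    _ ≤ pNormE 2 x * (Real.sqrt N * 1) := by
        apply mul_le_mul_of_nonneg_left _ (pNormE_nonneg _ _)
        exact mul_le_mul_of_nonneg_left hv1 (Real.sqrt_nonneg _)
    _ = Real.sqrt N * pNormE 2 x := by ring

end main

lemma inv_eq_facts (σ c : ℝ≥0∞) (hc0 : c ≠ 0) (hcT : c ≠ ⊤) (h : 1/σ = c) :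
    σ ≠ 0 ∧ σ ≠ ⊤ ∧ σ.toReal⁻¹ = c.toReal := by
  have hσ0 : σ ≠ 0 := by
    rintro rfl
    rw [ENNReal.div_zero (by norm_num)] at h
    exact hcT h.symm
  have hσT : σ ≠ ⊤ := by
    rintro rfl
    simp only [one_div, ENNReal.inv_top] at h
    exact hc0 h.symm
  refine ⟨hσ0, hσT, ?_⟩
  rw [← ENNReal.toReal_inv, ← one_div, h]

section L3sec

variable {n : ℕ} {A : Matrix (Fin n) (Fin n) ℝ} {s s' : ℝ≥0∞}

lemma L3 (hsymm : A.IsSymm) (hnn : ∀ i j, 0 ≤ A i j) (hs : 2 ≤ s) (hs' : 1 ≤ s')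
    (hconj : 1 / s + 1 / s' = 1) (σ σ' : ℝ≥0∞) (hσT : σ ≠ ⊤) (hσ'T : σ' ≠ ⊤)
    (hs'T : s' ≠ ⊤) (ht'1 : 1 ≤ s'.toReal)
    (hσt1 : 1 < σ.toReal) (ha0 : 0 < σ'.toReal)
    (hab : σ'.toReal * (s'.toReal⁻¹ + 1/2) = 2)
    (hcjR : σ.toReal⁻¹ + σ'.toReal⁻¹ = 1)
    (x : Fin n → ℝ) :
    pNormE σ (A.mulVec x) ≤ Real.sqrt (opNormE s' s (A ^ 2)) * pNormE σ' x := by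
  have hs1 : (1:ℝ≥0∞) ≤ s := le_trans (by norm_num) hs
  set N := opNormE s' s (A ^ 2) with hN
  have hN0 : 0 ≤ N := opNormE_nonneg s' s hs' _
  set a : ℝ := σ'.toReal with hadef
  set t' : ℝ := s'.toReal with ht'def
  have ht'0 : 0 < t' := by linarith
  set b : ℝ := t'⁻¹ with hbdef
  have hb0 : 0 < b := by positivity
  obtain ⟨y, hy1, hy2⟩ := exists_dual_fin σ σ' hσT hσ'T hσt1 hcjR (A.mulVec x)
  set F : Fin n → ℝ := fun j => |x j| ^ (a * b) with hF
  set F' : Fin n → ℝ := fun j => |x j| ^ (a / 2) with hF'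
  set G : Fin n → ℝ := fun i => |y i| ^ (a / 2) with hG
  set G' : Fin n → ℝ := fun i => |y i| ^ (a * b) with hG'
  set X : ℝ := ∑ j, |x j| ^ a with hX
  set Y : ℝ := ∑ i, |y i| ^ a with hY
  have hX0 : 0 ≤ X := Finset.sum_nonneg fun j _ => by positivity
  have hY0 : 0 ≤ Y := Finset.sum_nonneg fun i _ => by positivity
  have hab2 : a * b + a / 2 = 2 := by
    rw [hbdef]; nlinarith [hab]
  have hF0 : ∀ j, 0 ≤ F j := fun j => Real.rpow_nonneg (abs_nonneg _) _
  have hF'0 : ∀ j, 0 ≤ F' j := fun j => Real.rpow_nonneg (abs_nonneg _) _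
  have hG0 : ∀ i, 0 ≤ G i := fun i => Real.rpow_nonneg (abs_nonneg _) _
  have hG'0 : ∀ i, 0 ≤ G' i := fun i => Real.rpow_nonneg (abs_nonneg _) _
  -- norm computations
  have hnorm_s'F : pNormE s' F = X ^ b := by
    rw [pNormE_fin s' hs'T, ← ht'def]
    have h1 : ∀ j, |F j| ^ t' = |x j| ^ a := by
      intro j
      rw [hF]; simp only []
      rw [abs_of_nonneg (hF0 j), ← Real.rpow_mul (abs_nonneg _)]
      congr 1
      rw [hbdef]; field_simp
    rw [Finset.sum_congr rfl fun j _ => h1 j, ← hX, one_div, ← hbdef]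
  have hnorm_s'G' : pNormE s' G' = Y ^ b := by
    rw [pNormE_fin s' hs'T, ← ht'def]
    have h1 : ∀ i, |G' i| ^ t' = |y i| ^ a := by
      intro i
      rw [hG']; simp only []
      rw [abs_of_nonneg (hG'0 i), ← Real.rpow_mul (abs_nonneg _)]
      congr 1
      rw [hbdef]; field_simp
    rw [Finset.sum_congr rfl fun i _ => h1 i, ← hY, one_div, ← hbdef]
  have h2tR : ((2:ℝ≥0∞)).toReal = (2:ℝ) := by simp
  have hnorm_2F' : pNormE 2 F' = X ^ (1/(2:ℝ)) := by
    rw [pNormE_fin 2 (by norm_num), h2tR]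
    have h1 : ∀ j, |F' j| ^ (2:ℝ) = |x j| ^ a := by
      intro j
      rw [hF']; simp only []
      rw [abs_of_nonneg (hF'0 j), ← Real.rpow_mul (abs_nonneg _)]
      congr 1; ring
    rw [Finset.sum_congr rfl fun j _ => h1 j, ← hX]
  have hnorm_2G : pNormE 2 G = Y ^ (1/(2:ℝ)) := by
    rw [pNormE_fin 2 (by norm_num), h2tR]
    have h1 : ∀ i, |G i| ^ (2:ℝ) = |y i| ^ a := by
      intro i
      rw [hG]; simp only []
      rw [abs_of_nonneg (hG0 i), ← Real.rpow_mul (abs_nonneg _)]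
      congr 1; ring
    rw [Finset.sum_congr rfl fun i _ => h1 i, ← hY]
  have hnorm_x : pNormE σ' x = X ^ (1/a) := by
    rw [pNormE_fin σ' hσ'T, ← hadef, ← hX]
  have hnorm_y : pNormE σ' y = Y ^ (1/a) := by
    rw [pNormE_fin σ' hσ'T, ← hadef, ← hY]
  -- step 1 : bound by the doubly-indexed absolute sum
  have step1 : ∑ i, (A.mulVec x) i * y i ≤ ∑ i, ∑ j, A i j * (|x j| * |y i|) := by
    have : ∀ i, (A.mulVec x) i * y i = ∑ j, A i j * x j * y i := by
      intro i
      simp [Matrix.mulVec, dotProduct, Finset.sum_mul]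
    rw [Finset.sum_congr rfl fun i _ => this i]
    refine Finset.sum_le_sum fun i _ => Finset.sum_le_sum fun j _ => ?_
    calc A i j * x j * y i ≤ |A i j * x j * y i| := le_abs_self _
      _ = A i j * (|x j| * |y i|) := by
          rw [abs_mul, abs_mul, abs_of_nonneg (hnn i j)]; ring
  -- step 2 : Cauchy-Schwarz split
  have hptwise : ∀ i j, A i j * (|x j| * |y i|) =
      Real.sqrt (A i j * F j * G i) * Real.sqrt (A i j * F' j * G' i) := by
    intro i j
    have hnn1 : 0 ≤ A i j * F j * G i := mul_nonneg (mul_nonneg (hnn i j) (hF0 j)) (hG0 i)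
    have hnn2 : 0 ≤ A i j * F' j * G' i := mul_nonneg (mul_nonneg (hnn i j) (hF'0 j)) (hG'0 i)
    rw [← Real.sqrt_mul hnn1]
    have hFF' : F j * F' j = |x j| ^ (2:ℝ) := by
      rw [hF, hF']; simp only []
      rw [← Real.rpow_add' (abs_nonneg _) (by rw [hab2]; norm_num), hab2]
    have hGG' : G i * G' i = |y i| ^ (2:ℝ) := by
      rw [hG, hG']; simp only []
      rw [← Real.rpow_add' (abs_nonneg _) (by rw [add_comm, hab2]; norm_num),
        add_comm, hab2]
    have hinner : A i j * F j * G i * (A i j * F' j * G' i)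
        = (A i j * (|x j| * |y i|)) ^ 2 := by
      have : A i j * F j * G i * (A i j * F' j * G' i)
          = (A i j * A i j) * ((F j * F' j) * (G i * G' i)) := by ring
      rw [this, hFF', hGG', sq_abs_rpow, sq_abs_rpow]
      rw [mul_pow, mul_pow, sq_abs, sq_abs]
      ring
    rw [hinner, Real.sqrt_sq (mul_nonneg (hnn i j) (by positivity))]
  have step2 : ∑ i, ∑ j, A i j * (|x j| * |y i|) ≤
      Real.sqrt (∑ i, ∑ j, A i j * F j * G i) *
      Real.sqrt (∑ i, ∑ j, A i j * F' j * G' i) := by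
    have e1 : ∑ i, ∑ j, A i j * (|x j| * |y i|)
        = ∑ p : Fin n × Fin n, Real.sqrt (A p.1 p.2 * F p.2 * G p.1) *
            Real.sqrt (A p.1 p.2 * F' p.2 * G' p.1) := by
      rw [← Finset.univ_product_univ, Finset.sum_product]
      exact Finset.sum_congr rfl fun i _ => Finset.sum_congr rfl fun j _ => hptwise i j
    have e2 : ∑ i, ∑ j, A i j * F j * G i
        = ∑ p : Fin n × Fin n, Real.sqrt (A p.1 p.2 * F p.2 * G p.1) ^ 2 := by
      rw [← Finset.univ_product_univ, Finset.sum_product]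
      refine Finset.sum_congr rfl fun i _ => Finset.sum_congr rfl fun j _ => ?_
      rw [Real.sq_sqrt (mul_nonneg (mul_nonneg (hnn i j) (hF0 j)) (hG0 i))]
    have e3 : ∑ i, ∑ j, A i j * F' j * G' i
        = ∑ p : Fin n × Fin n, Real.sqrt (A p.1 p.2 * F' p.2 * G' p.1) ^ 2 := by
      rw [← Finset.univ_product_univ, Finset.sum_product]
      refine Finset.sum_congr rfl fun i _ => Finset.sum_congr rfl fun j _ => ?_
      rw [Real.sq_sqrt (mul_nonneg (mul_nonneg (hnn i j) (hF'0 j)) (hG'0 i))]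
    rw [e1, e2, e3]
    exact Real.sum_mul_le_sqrt_mul_sqrt _ _ _
  -- step 3 : bound the two factors
  have fac1 : ∑ i, ∑ j, A i j * F j * G i ≤ (Real.sqrt N * X ^ b) * Y ^ (1/(2:ℝ)) := by
    have e1 : ∑ i, ∑ j, A i j * F j * G i = ∑ i, (A.mulVec F) i * G i := by
      refine Finset.sum_congr rfl fun i _ => ?_
      simp [Matrix.mulVec, dotProduct, Finset.sum_mul]
    have h22 : (1:ℝ≥0∞)/2 + 1/2 = 1 := by
      rw [ENNReal.div_add_div_same]
      have : (1:ℝ≥0∞) + 1 = 2 := one_add_one_eq_two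
      rw [this, ENNReal.div_self (by norm_num) (by norm_num)]
    calc ∑ i, ∑ j, A i j * F j * G i = ∑ i, (A.mulVec F) i * G i := e1
      _ ≤ pNormE 2 (A.mulVec F) * pNormE 2 G := holder 2 2 one_le_two one_le_two h22 _ _
      _ ≤ (Real.sqrt N * pNormE s' F) * pNormE 2 G := by
          apply mul_le_mul_of_nonneg_right (L1 hsymm hs hs' hconj F) (pNormE_nonneg _ _)
      _ = (Real.sqrt N * X ^ b) * Y ^ (1/(2:ℝ)) := by rw [hnorm_s'F, hnorm_2G]
  have fac2 : ∑ i, ∑ j, A i j * F' j * G' i ≤ (Real.sqrt N * X ^ (1/(2:ℝ))) * Y ^ b := by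
    have e1 : ∑ i, ∑ j, A i j * F' j * G' i = ∑ i, (A.mulVec F') i * G' i := by
      refine Finset.sum_congr rfl fun i _ => ?_
      simp [Matrix.mulVec, dotProduct, Finset.sum_mul]
    calc ∑ i, ∑ j, A i j * F' j * G' i = ∑ i, (A.mulVec F') i * G' i := e1
      _ ≤ pNormE s (A.mulVec F') * pNormE s' G' := holder s s' hs1 hs' hconj _ _
      _ ≤ (Real.sqrt N * pNormE 2 F') * pNormE s' G' := by
          apply mul_le_mul_of_nonneg_right (L2 hsymm hs hs' hconj F') (pNormE_nonneg _ _)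
      _ = (Real.sqrt N * X ^ (1/(2:ℝ))) * Y ^ b := by rw [hnorm_2F', hnorm_s'G']
  -- assemble
  have hXb0 : 0 ≤ X ^ b := Real.rpow_nonneg hX0 _
  have hYb0 : 0 ≤ Y ^ b := Real.rpow_nonneg hY0 _
  have hXh0 : 0 ≤ X ^ (1/(2:ℝ)) := Real.rpow_nonneg hX0 _
  have hYh0 : 0 ≤ Y ^ (1/(2:ℝ)) := Real.rpow_nonneg hY0 _
  have key : pNormE σ (A.mulVec x) ≤
      Real.sqrt ((Real.sqrt N * X ^ b) * Y ^ (1/(2:ℝ))) *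
      Real.sqrt ((Real.sqrt N * X ^ (1/(2:ℝ))) * Y ^ b) := by
    calc pNormE σ (A.mulVec x) ≤ ∑ i, (A.mulVec x) i * y i := hy2
      _ ≤ ∑ i, ∑ j, A i j * (|x j| * |y i|) := step1
      _ ≤ Real.sqrt (∑ i, ∑ j, A i j * F j * G i) *
          Real.sqrt (∑ i, ∑ j, A i j * F' j * G' i) := step2
      _ ≤ _ := by
          apply mul_le_mul (Real.sqrt_le_sqrt fac1) (Real.sqrt_le_sqrt fac2)
            (Real.sqrt_nonneg _) (Real.sqrt_nonneg _)
  have hcollect : Real.sqrt ((Real.sqrt N * X ^ b) * Y ^ (1/(2:ℝ))) *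
      Real.sqrt ((Real.sqrt N * X ^ (1/(2:ℝ))) * Y ^ b)
      = Real.sqrt N * (X ^ ((b + 1/2)/2) * Y ^ ((b + 1/2)/2)) := by
    rw [← Real.sqrt_mul (by positivity)]
    have e1 : (Real.sqrt N * X ^ b) * Y ^ (1/(2:ℝ)) *
        ((Real.sqrt N * X ^ (1/(2:ℝ))) * Y ^ b)
        = (Real.sqrt N * Real.sqrt N) * ((X ^ b * X ^ (1/(2:ℝ))) * (Y ^ (1/(2:ℝ)) * Y ^ b)) := by
      ring
    have e2 : X ^ b * X ^ (1/(2:ℝ)) = X ^ (b + 1/2) :=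
      (Real.rpow_add' hX0 (by positivity)).symm
    have e3 : (Y:ℝ) ^ (1/(2:ℝ)) * Y ^ b = Y ^ (b + 1/2) := by
      rw [mul_comm]
      exact (Real.rpow_add' hY0 (by positivity)).symm
    rw [e1, e2, e3, Real.mul_self_sqrt hN0]
    have hsr : ∀ (z c : ℝ), 0 ≤ z → Real.sqrt (z ^ c) = z ^ (c/2) := by
      intro z c hz
      rw [Real.sqrt_eq_rpow, ← Real.rpow_mul hz]
      congr 1; ring
    rw [Real.sqrt_mul hN0, Real.sqrt_mul (Real.rpow_nonneg hX0 _),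
      hsr X _ hX0, hsr Y _ hY0]
  have hfrac : (b + 1/2)/2 = 1/a := by
    have ha' : a ≠ 0 := ha0.ne'
    rw [hbdef]
    field_simp
    field_simp [hbdef] at hab
    have hb' : b * t' = 1 := by rw [hbdef]; exact inv_mul_cancel₀ ht'0.ne'
    linear_combination t' * hab - 2 * a * hb'
  calc pNormE σ (A.mulVec x) ≤ Real.sqrt N * (X ^ ((b + 1/2)/2) * Y ^ ((b + 1/2)/2)) := by
        rw [← hcollect]; exact key
    _ = Real.sqrt N * (pNormE σ' x * pNormE σ' y) := by
        rw [hfrac, ← hnorm_x, ← hnorm_y]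
    _ ≤ Real.sqrt N * (pNormE σ' x * 1) := by
        apply mul_le_mul_of_nonneg_left _ (Real.sqrt_nonneg _)
        exact mul_le_mul_of_nonneg_left hy1 (pNormE_nonneg _ _)
    _ = Real.sqrt N * pNormE σ' x := by ring

end L3sec

end aux

/-- Let A be a symmetric nonnegative real n×n matrix and s, s' ∈ [1,∞] with
1/s + 1/s' = 1 and s ≥ 2. If N = ‖A²‖_{s'→s}, then ‖A‖_{s'→2} ≤ N^{1/2} and
‖A‖_{2→s} ≤ N^{1/2}; consequently, with 1/σ = (1/2)(1/2) + (1/2)(1/s) and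
1/σ' = (1/2)(1/s') + (1/2)(1/2), one has ‖A‖_{σ'→σ}² ≤ ‖A²‖_{s'→s}. -/
theorem stmt4 (n : ℕ) (A : Matrix (Fin n) (Fin n) ℝ) (hsymm : A.IsSymm)
    (hnn : ∀ i j, 0 ≤ A i j) (s s' : ℝ≥0∞) (hs : 2 ≤ s) (hs' : 1 ≤ s')
    (hconj : 1 / s + 1 / s' = 1) (σ σ' : ℝ≥0∞)
    (hσ : 1 / σ = 1 / 2 * (1 / 2) + 1 / 2 * (1 / s))
    (hσ' : 1 / σ' = 1 / 2 * (1 / s') + 1 / 2 * (1 / 2)) :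
    opNormE s' 2 A ≤ Real.sqrt (opNormE s' s (A ^ 2)) ∧
      opNormE 2 s A ≤ Real.sqrt (opNormE s' s (A ^ 2)) ∧
      opNormE σ' σ A ^ 2 ≤ opNormE s' s (A ^ 2) := by
  have hs1 : (1:ℝ≥0∞) ≤ s := le_trans (by norm_num) hs
  have hs0 : s ≠ 0 := by intro h; rw [h] at hs; exact absurd hs (by norm_num)
  have hs'0 : s' ≠ 0 := by intro h; rw [h] at hs'; exact absurd hs' (by norm_num)
  have hs'T : s' ≠ ⊤ := by
    rintro rfl
    rcases conj_cases s ⊤ hs1 le_top hconj with ⟨_, h1⟩ | ⟨_, h1⟩ | ⟨_, hT, _⟩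
    · exact absurd h1 (by simp)
    · rw [h1] at hs; exact absurd hs (by norm_num)
    · exact hT rfl
  have hsiT : ((1:ℝ≥0∞)/s) ≠ ⊤ := by simp [one_div, ENNReal.inv_ne_top, hs0]
  have hs'iT : ((1:ℝ≥0∞)/s') ≠ ⊤ := by simp [one_div, ENNReal.inv_ne_top, hs'0]
  set st : ℝ := ((1:ℝ≥0∞)/s).toReal with hstdef
  set s't : ℝ := ((1:ℝ≥0∞)/s').toReal with hs'tdef
  have hst0 : 0 ≤ st := ENNReal.toReal_nonneg
  have hs't0 : 0 ≤ s't := ENNReal.toReal_nonneg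
  have hsum1 : st + s't = 1 := by
    rw [hstdef, hs'tdef, ← ENNReal.toReal_add hsiT hs'iT, hconj]
    simp
  have hsthalf : st ≤ 1/2 := by
    have h1 : (1:ℝ≥0∞)/s ≤ 1/2 := ENNReal.div_le_div_left hs 1
    have h2 := (ENNReal.toReal_le_toReal hsiT (by simp)).mpr h1
    rw [← hstdef] at h2
    calc st ≤ ((1:ℝ≥0∞)/2).toReal := h2
      _ = 1/2 := by norm_num
  -- facts about σ
  have hc1 : ((1:ℝ≥0∞)/2 * (1/2) + 1/2 * (1/s)) ≠ 0 := by
    simp only [ne_eq, add_eq_zero, mul_eq_zero]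
    norm_num
  have hc1T : ((1:ℝ≥0∞)/2 * (1/2) + 1/2 * (1/s)) ≠ ⊤ :=
    ENNReal.add_ne_top.mpr ⟨ENNReal.mul_ne_top (by simp) (by simp),
      ENNReal.mul_ne_top (by simp) hsiT⟩
  obtain ⟨hσ0, hσT, hσval⟩ := inv_eq_facts σ _ hc1 hc1T hσ
  have hσval' : σ.toReal⁻¹ = 1/4 + st/2 := by
    rw [hσval, ENNReal.toReal_add (ENNReal.mul_ne_top (by simp) (by simp))
      (ENNReal.mul_ne_top (by simp) hsiT), ENNReal.toReal_mul, ENNReal.toReal_mul,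
      ← hstdef]
    norm_num
    ring
  have hc2 : ((1:ℝ≥0∞)/2 * (1/s') + 1/2 * (1/2)) ≠ 0 := by
    simp only [ne_eq, add_eq_zero, mul_eq_zero]
    norm_num
  have hc2T : ((1:ℝ≥0∞)/2 * (1/s') + 1/2 * (1/2)) ≠ ⊤ :=
    ENNReal.add_ne_top.mpr ⟨ENNReal.mul_ne_top (by simp) hs'iT,
      ENNReal.mul_ne_top (by simp) (by simp)⟩
  obtain ⟨hσ'0, hσ'T, hσ'val⟩ := inv_eq_facts σ' _ hc2 hc2T hσ'
  have hσ'val' : σ'.toReal⁻¹ = s't/2 + 1/4 := by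
    rw [hσ'val, ENNReal.toReal_add (ENNReal.mul_ne_top (by simp) hs'iT)
      (ENNReal.mul_ne_top (by simp) (by simp)), ENNReal.toReal_mul, ENNReal.toReal_mul,
      ← hs'tdef]
    norm_num
    ring
  set σt := σ.toReal with hσtdef
  set a := σ'.toReal with hadef
  have hσtpos : 0 < σt := ENNReal.toReal_pos hσ0 hσT
  have hapos : 0 < a := ENNReal.toReal_pos hσ'0 hσ'T
  have hσt1 : 1 < σt := by
    have h1 : σt * σt⁻¹ = 1 := mul_inv_cancel₀ hσtpos.ne'
    have h2 : σt⁻¹ ≤ 1/2 := by rw [hσval']; linarith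
    nlinarith
  have hcjR : σt⁻¹ + a⁻¹ = 1 := by
    rw [hσval', hσ'val']; linarith
  have hs'tval : s't = s'.toReal⁻¹ := by
    rw [hs'tdef, one_div, ENNReal.toReal_inv]
  have hab : a * (s'.toReal⁻¹ + 1/2) = 2 := by
    have h1 : a * a⁻¹ = 1 := mul_inv_cancel₀ hapos.ne'
    rw [← hs'tval]
    rw [hσ'val'] at h1
    nlinarith
  have ht'1 : 1 ≤ s'.toReal := by
    have := (ENNReal.toReal_le_toReal (by simp) hs'T).mpr hs'
    simpa using this
  have hσ'1 : (1:ℝ≥0∞) ≤ σ' := by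
    refine (ENNReal.toReal_le_toReal (by simp) hσ'T).mp ?_
    have h2 : a⁻¹ ≤ 1 := by rw [hσ'val']; linarith
    have h1 : a * a⁻¹ = 1 := mul_inv_cancel₀ hapos.ne'
    simp only [ENNReal.toReal_one]
    nlinarith
  set N := opNormE s' s (A ^ 2) with hN
  have hN0 : 0 ≤ N := opNormE_nonneg s' s hs' _
  refine ⟨opNormE_le s' 2 hs' A (Real.sqrt_nonneg _) (L1 hsymm hs hs' hconj),
    opNormE_le 2 s one_le_two A (Real.sqrt_nonneg _) (L2 hsymm hs hs' hconj), ?_⟩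
  have h3 := opNormE_le σ' σ hσ'1 A (Real.sqrt_nonneg _)
    (L3 hsymm hnn hs hs' hconj σ σ' hσT hσ'T hs'T ht'1 hσt1 hapos hab hcjR)
  have h0 := opNormE_nonneg σ' σ hσ'1 A
  calc opNormE σ' σ A ^ 2 ≤ Real.sqrt N ^ 2 := by nlinarith
    _ = N := Real.sq_sqrt hN0
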